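/- Let F : A → B be a right exact additive functor between additive categories with cokernels. Then the set of morphisms in A sent to isomorphisms by F is a severe right Ore set: it contains all isomorphisms, is closed under composition, is closed under pushouts, and if F(s) is an isomorphism and s ∘ a = 0 then F applied to the cokernel map of a is an isomorphism. -/
import Mathlib

open CategoryTheory CategoryTheory.Limits

universe v v' u u'

/-- The pushout of `s : A ⟶ B` along `a : A ⟶ C'`, defined via the cokernel of
`(s a) : A ⟶ B ⊞ C'`. -/
noncomputable def pushoutAlong {C : Type u} [Category.{v} C] [Preadditive C]
    [HasCokernels C] [HasBinaryBiproducts C]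
    {A B C' : C} (s : A ⟶ B) (a : A ⟶ C') :
    C' ⟶ cokernel (biprod.lift s a) :=
  biprod.inr ≫ cokernel.π (biprod.lift s a)

/-- Abstract form of the pushout argument: if `s` is an isomorphism and `π` is a cokernel
of `s ≫ inl + a ≫ inr` (with biproduct-like data `inl, inr, fst, snd`), then `inr ≫ π`
is an isomorphism. -/
lemma aux_pushout {D : Type u'} [Category.{v'} D] [Preadditive D]
    {A B C' P Q : D} (s : A ⟶ B) (a : A ⟶ C')
    (inl : B ⟶ P) (inr : C' ⟶ P) (fst : P ⟶ B) (snd : P ⟶ C')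
    (hlf : inl ≫ fst = 𝟙 B) (hls : inl ≫ snd = 0)
    (hrf : inr ≫ fst = 0) (hrs : inr ≫ snd = 𝟙 C')
    (htotal : fst ≫ inl + snd ≫ inr = 𝟙 P)
    {f : A ⟶ P} (hf : f = s ≫ inl + a ≫ inr)
    [IsIso s]
    (π : P ⟶ Q) (hπ : f ≫ π = 0)
    (hc : IsColimit (CokernelCofork.ofπ π hπ)) :
    IsIso (inr ≫ π) := by
  set k : P ⟶ C' := snd - fst ≫ inv s ≫ a with hk
  have hfk : f ≫ k = 0 := by
    simp [hk, hf, Preadditive.comp_sub, Preadditive.add_comp, hls, hrs, hlf, hrf, reassoc_of% hls,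
      reassoc_of% hrs, reassoc_of% hlf, reassoc_of% hrf]
  let δ : Q ⟶ C' := hc.desc (CokernelCofork.ofπ k hfk)
  have hπδ : π ≫ δ = k := Cofork.IsColimit.π_desc hc
  have hkinr : k ≫ inr ≫ π = π := by
    have h1 : k ≫ inr = 𝟙 P - fst ≫ inv s ≫ f := by
      rw [hk, hf, Preadditive.sub_comp, ← htotal]
      simp [Preadditive.comp_add]
    rw [reassoc_of% h1]
    simp [Preadditive.sub_comp, hπ]
  refine ⟨δ, ?_, ?_⟩
  · rw [Category.assoc, hπδ, hk, Preadditive.comp_sub, reassoc_of% hrf, hrs]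
    simp
  · apply Cofork.IsColimit.hom_ext hc
    simpa [reassoc_of% hπδ] using hkinr

/-- Let `F : C ⥤ D` be a right exact additive functor between additive categories with
cokernels.  Then the class of morphisms sent to isomorphisms by `F` is a severe right Ore
set: it contains all isomorphisms, is closed under composition, is closed under pushouts,
and if `F s` is an isomorphism and `s ≫ a = 0` then `F` applied to the cokernel map of
`a` is an isomorphism. -/
theorem inverted_morphisms_severe_right_ore
    {C : Type u} [Category.{v} C] [Preadditive C] [HasCokernels C] [HasBinaryBiproducts C]
    {D : Type u'} [Category.{v'} D] [Preadditive D] [HasCokernels D] [HasBinaryBiproducts D]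
    (F : C ⥤ D) [F.Additive]
    (hF : ∀ ⦃A B : C⦄ (f : A ⟶ B),
      Nonempty (IsColimit (CokernelCofork.ofπ (f := F.map f) (F.map (cokernel.π f))
        (by rw [← F.map_comp, cokernel.condition, Functor.map_zero])))) :
    (∀ ⦃A B : C⦄ (f : A ⟶ B), IsIso f → IsIso (F.map f)) ∧
    (∀ ⦃A B B' : C⦄ (f : A ⟶ B) (g : B ⟶ B'),
      IsIso (F.map f) → IsIso (F.map g) → IsIso (F.map (f ≫ g))) ∧
    (∀ ⦃A B C' : C⦄ (s : A ⟶ B) (a : A ⟶ C'),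
      IsIso (F.map s) → IsIso (F.map (pushoutAlong s a))) ∧
    (∀ ⦃A B C' : C⦄ (s : A ⟶ B) (a : B ⟶ C'),
      IsIso (F.map s) → s ≫ a = 0 → IsIso (F.map (cokernel.π a))) := by
  refine ⟨?_, ?_, ?_, ?_⟩
  · intro A B f hf
    haveI := hf
    infer_instance
  · intro A B B' f g hf hg
    haveI := hf; haveI := hg
    rw [F.map_comp]
    infer_instance
  · intro A B C' s a hs
    haveI := hs
    obtain ⟨hc⟩ := hF (biprod.lift s a)
    have hf : F.map (biprod.lift s a) =
        F.map s ≫ F.map biprod.inl + F.map a ≫ F.map biprod.inr := by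
      rw [← F.map_comp, ← F.map_comp, ← F.map_add, ← biprod.lift_eq]
    have := aux_pushout (F.map s) (F.map a) (F.map biprod.inl) (F.map biprod.inr)
      (F.map biprod.fst) (F.map biprod.snd)
      (by rw [← F.map_comp, biprod.inl_fst, F.map_id])
      (by rw [← F.map_comp, biprod.inl_snd, F.map_zero])
      (by rw [← F.map_comp, biprod.inr_fst, F.map_zero])
      (by rw [← F.map_comp, biprod.inr_snd, F.map_id])
      (by rw [← F.map_comp, ← F.map_comp, ← F.map_add, biprod.total, F.map_id])
      hf (F.map (cokernel.π (biprod.lift s a)))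
      (by rw [← F.map_comp, cokernel.condition, Functor.map_zero]) hc
    rw [pushoutAlong, F.map_comp]
    exact this
  · intro A B C' s a hs hsa
    haveI := hs
    have ha : F.map a = 0 := by
      have : F.map s ≫ F.map a = 0 := by
        rw [← F.map_comp, hsa, F.map_zero]
      rwa [← cancel_epi (F.map s), comp_zero]
    obtain ⟨hc⟩ := hF a
    exact CokernelCofork.IsColimit.isIso_π _ hc ha
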